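/- Let Ĝ act strongly on a C*-algebra A and let D be a maximal abelian subalgebra of the fixed-point algebra A₀ = A^Ĝ. If n ∈ A is a normalizer of D (i.e., nDn* ⊆ D and n*Dn ⊆ D), then for every t ∈ Γ, Φ_t(n) is also a normalizer of D. -/

import Mathlib

open MeasureTheory Filter
open scoped Classical

section Aux

lemma gc_smul_nonneg {A : Type*} [CStarAlgebra A] [PartialOrder A] [StarOrderedRing A]
    {c : ℝ} (hc : 0 ≤ c) {y : A} (hy : 0 ≤ y) : 0 ≤ (c:ℂ) • y := by
  have h := star_left_conjugate_nonneg hy (((Real.sqrt c : ℝ):ℂ) • (1:A))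
  have heq : star ((((Real.sqrt c : ℝ):ℂ)) • (1:A)) * y * ((((Real.sqrt c : ℝ):ℂ)) • (1:A))
      = (c:ℂ) • y := by
    rw [star_smul, star_one, smul_mul_assoc, smul_mul_assoc, mul_smul_comm, one_mul, mul_one,
      smul_smul, Complex.star_def, Complex.conj_ofReal, ← Complex.ofReal_mul,
      Real.mul_self_sqrt hc]
  rwa [heq] at h

lemma gc_est {A : Type*} [CStarAlgebra A] [PartialOrder A] [StarOrderedRing A]
    (x : A) (ε : ℝ) (hε : 0 < ε) (r : A)
    (hr : r * (x * star x + (ε:ℂ) • 1) = 1) (hr' : (x * star x + (ε:ℂ) • 1) * r = 1) :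
    ‖(ε:ℂ) • (r * x)‖ ≤ Real.sqrt (ε * ‖(1:A)‖) := by
  set a := x * star x with ha_def
  have ha : (0:A) ≤ a := mul_star_self_nonneg x
  have hasa : IsSelfAdjoint a := by
    rw [ha_def, IsSelfAdjoint, star_mul, star_star]
  have hssa : IsSelfAdjoint (a + (ε:ℂ) • 1) := by
    rw [IsSelfAdjoint, star_add, hasa.star_eq, star_smul, star_one, Complex.star_def,
      Complex.conj_ofReal]
  have hrs : star r = r := by
    calc star r = star r * ((a + (ε:ℂ) • 1) * r) := by rw [hr', mul_one]
    _ = (star r * star (a + (ε:ℂ) • 1)) * r := by rw [hssa.star_eq, mul_assoc]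
    _ = star ((a + (ε:ℂ) • 1) * r) * r := by rw [star_mul]
    _ = r := by rw [hr', star_one, one_mul]
  have h2 : ((ε*ε : ℝ):ℂ) • a ≤ (ε:ℂ) • ((a + (ε:ℂ) • 1) * (a + (ε:ℂ) • 1)) := by
    rw [← sub_nonneg]
    have hid : (ε:ℂ) • ((a + (ε:ℂ) • 1) * (a + (ε:ℂ) • 1)) - ((ε*ε : ℝ):ℂ) • a
        = (ε:ℂ) • (a * a) + ((ε*ε : ℝ):ℂ) • a + ((ε*(ε*ε) : ℝ):ℂ) • 1 := by
      simp only [mul_add, add_mul, smul_mul_assoc, mul_smul_comm, smul_smul, one_mul, mul_one,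
        smul_add, Complex.ofReal_mul]
      abel
    rw [hid]
    have n1 : (0:A) ≤ (ε:ℂ) • (a * a) :=
      gc_smul_nonneg hε.le (by simpa [hasa.star_eq] using star_mul_self_nonneg a)
    have n2 : (0:A) ≤ ((ε*ε : ℝ):ℂ) • a := gc_smul_nonneg (by positivity) ha
    have n3 : (0:A) ≤ ((ε*(ε*ε) : ℝ):ℂ) • (1:A) :=
      gc_smul_nonneg (by positivity) (by simpa using star_mul_self_nonneg (1:A))
    exact add_nonneg (add_nonneg n1 n2) n3
  have h3 : ((ε*ε : ℝ):ℂ) • (r * a * r) ≤ (ε:ℂ) • 1 := by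
    have hcc := star_left_conjugate_le_conjugate h2 r
    rw [hrs] at hcc
    calc ((ε*ε : ℝ):ℂ) • (r * a * r) = r * (((ε*ε : ℝ):ℂ) • a) * r := by
          rw [mul_smul_comm, smul_mul_assoc]
    _ ≤ r * ((ε:ℂ) • ((a + (ε:ℂ) • 1) * (a + (ε:ℂ) • 1))) * r := hcc
    _ = (ε:ℂ) • ((r * (a + (ε:ℂ) • 1)) * ((a + (ε:ℂ) • 1) * r)) := by
          rw [mul_smul_comm, smul_mul_assoc, mul_assoc, mul_assoc, mul_assoc]
    _ = (ε:ℂ) • 1 := by rw [hr, hr', mul_one]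
  have h4 : (0:A) ≤ ((ε*ε : ℝ):ℂ) • (r * a * r) := by
    refine gc_smul_nonneg (by positivity) ?_
    have hcn := star_left_conjugate_nonneg ha r
    rwa [hrs] at hcn
  have h5 := CStarAlgebra.norm_le_norm_of_nonneg_of_le h4 h3
  have h6 : ‖((ε:ℂ)) • (1:A)‖ = ε * ‖(1:A)‖ := by
    rw [norm_smul]; simp [abs_of_pos hε]
  refine Real.le_sqrt_of_sq_le ?_
  have hz : ((ε:ℂ) • (r * x)) * star ((ε:ℂ) • (r * x)) = ((ε*ε : ℝ):ℂ) • (r * a * r) := by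
    rw [star_smul, Complex.star_def, Complex.conj_ofReal, star_mul, hrs, smul_mul_smul_comm,
      ← Complex.ofReal_mul]
    rw [ha_def]; noncomm_ring
  calc ‖(ε:ℂ) • (r * x)‖ ^ 2 = ‖((ε:ℂ) • (r * x)) * star ((ε:ℂ) • (r * x))‖ := by
        rw [CStarRing.norm_self_mul_star]; ring
  _ ≤ ε * ‖(1:A)‖ := by rw [hz]; rw [h6] at h5; exact h5

theorem gamma_cartan_aux
    {A : Type*} [NormedRing A] [StarRing A] [CStarRing A] [NormedAlgebra ℂ A]
    [CompleteSpace A] [StarModule ℂ A]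
    {Γ : Type*} [AddCommGroup Γ]
    {Gh : Type*} [CommGroup Gh] [TopologicalSpace Gh] [IsTopologicalGroup Gh]
    [CompactSpace Gh] [MeasurableSpace Gh] [BorelSpace Gh]
    (μ : Measure Gh) [μ.IsHaarMeasure] [IsProbabilityMeasure μ]
    (β : Gh →* (A ≃ₐ[ℂ] A))
    (hβstar : ∀ (ω : Gh) (a : A), β ω (star a) = star (β ω a))
    (hβiso : ∀ (ω : Gh) (a : A), ‖β ω a‖ = ‖a‖)
    (hβcont : ∀ a : A, Continuous fun ω => β ω a)
    (pair : Gh → Γ → ℂ)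
    (hpair_cont : ∀ t, Continuous fun ω => pair ω t)
    (hpair_norm : ∀ ω t, ‖pair ω t‖ = 1)
    (hpair_mul : ∀ ω σ t, pair (ω * σ) t = pair ω t * pair σ t)
    (D : StarSubalgebra ℂ A)
    (hDfix : ∀ d ∈ D, ∀ ω : Gh, β ω d = d)
    (hDcomm : ∀ d ∈ D, ∀ e ∈ D, d * e = e * d)
    (hDmasa : ∀ a : A, (∀ ω : Gh, β ω a = a) → (∀ d ∈ D, a * d = d * a) → a ∈ D)
    (x : A)
    (hx : ∀ d ∈ D, x * d * star x ∈ D ∧ star x * d * x ∈ D) :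
    ∀ t : Γ, ∀ d ∈ D,
      (∫ ω, pair ω⁻¹ t • β ω x ∂μ) * d * star (∫ ω, pair ω⁻¹ t • β ω x ∂μ) ∈ D := by
  letI : CStarAlgebra A := { ‹NormedRing A›, ‹StarRing A›, ‹CompleteSpace A›, ‹CStarRing A›,
    ‹NormedAlgebra ℂ A›, ‹StarModule ℂ A› with }
  letI := CStarAlgebra.spectralOrder A
  haveI := CStarAlgebra.spectralOrderedRing A
  intro t d hd
  -- basic memberships
  have h1D : (1:A) ∈ D := hDmasa 1 (fun ω => map_one (β ω)) (fun c _ => by rw [one_mul, mul_one])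
  have hbD : star x * x ∈ D := by simpa using (hx 1 h1D).2
  have haD : x * star x ∈ D := by simpa using (hx 1 h1D).1
  -- the averaging operator
  have hcont : ∀ z : A, Continuous fun ω => pair ω⁻¹ t • β ω z := fun z =>
    (Continuous.comp (hpair_cont t) continuous_inv).smul (hβcont z)
  have hint : ∀ z : A, Integrable (fun ω => pair ω⁻¹ t • β ω z) μ := fun z =>
    (hcont z).integrable_of_hasCompactSupport (HasCompactSupport.of_compactSpace _)
  set Phi : A → A := fun z => ∫ ω, pair ω⁻¹ t • β ω z ∂μ with hPhi_def
  have hPhi_lmul : ∀ e ∈ D, ∀ z : A, e * Phi z = Phi (e * z) := by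
    intro e he z
    have h := (ContinuousLinearMap.integral_comp_comm (ContinuousLinearMap.mul ℂ A e)
      (hint z)).symm
    simp only [ContinuousLinearMap.mul_apply'] at h
    rw [hPhi_def]
    simp only []
    rw [h]
    congr 1; funext ω
    rw [mul_smul_comm]
    congr 1
    conv_lhs => rw [← hDfix e he ω]
    rw [← map_mul]
  have hPhi_rmul : ∀ c ∈ D, ∀ z : A, Phi z * c = Phi (z * c) := by
    intro c hc z
    have h := (ContinuousLinearMap.integral_comp_comm ((ContinuousLinearMap.mul ℂ A).flip c)
      (hint z)).symm
    simp only [ContinuousLinearMap.flip_apply, ContinuousLinearMap.mul_apply'] at h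
    rw [hPhi_def]
    simp only []
    rw [h]
    congr 1; funext ω
    rw [smul_mul_assoc]
    congr 1
    conv_lhs => rw [← hDfix c hc ω]
    rw [← map_mul]
  have hPhi_norm : ∀ z : A, ‖Phi z‖ ≤ ‖z‖ := by
    intro z
    have h := norm_integral_le_of_norm_le_const (μ := μ)
      (f := fun ω => pair ω⁻¹ t • β ω z) (C := ‖z‖)
      (Eventually.of_forall fun ω => by rw [norm_smul, hpair_norm, hβiso, one_mul])
    simpa using h
  have hPhi_sub : ∀ z w : A, Phi z - Phi w = Phi (z - w) := by
    intro z w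
    rw [hPhi_def]
    simp only []
    rw [← integral_sub (hint z) (hint w)]
    congr 1; funext ω
    rw [← smul_sub, ← map_sub]
  -- homogeneity of m := Phi x
  have hhom : ∀ τ : Gh, β τ (Phi x) = pair τ t • Phi x := by
    intro τ
    set L : A →L[ℂ] A := LinearMap.mkContinuous (AlgEquiv.toLinearMap (β τ)) 1
      (fun z => by simp [hβiso]) with hL_def
    have hLa : ∀ z : A, L z = β τ z := fun z => rfl
    have h1 : β τ (Phi x) = ∫ ω, β τ (pair ω⁻¹ t • β ω x) ∂μ := by
      rw [← hLa]
      rw [← ContinuousLinearMap.integral_comp_comm L (hint x)]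
      congr 1
    rw [h1]
    have h2 : (fun ω => β τ (pair ω⁻¹ t • β ω x))
        = fun ω => (fun σ => pair (τ⁻¹ * σ)⁻¹ t • β σ x) (τ * ω) := by
      funext ω
      have hmm : β (τ * ω) x = β τ (β ω x) := by rw [map_mul]; rfl
      rw [_root_.map_smul]
      simp only [inv_mul_cancel_left, hmm]
    rw [h2, integral_mul_left_eq_self (fun σ => pair (τ⁻¹ * σ)⁻¹ t • β σ x) τ]
    have h3 : (fun σ => pair (τ⁻¹ * σ)⁻¹ t • β σ x)
        = fun σ => pair τ t • (pair σ⁻¹ t • β σ x) := by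
      funext σ
      rw [mul_inv_rev, inv_inv, hpair_mul, mul_comm, mul_smul]
    rw [h3, integral_smul]
  -- scalar fact
  have hunit_scalar : ∀ τ : Gh, pair τ t * star (pair τ t) = 1 := by
    intro τ
    rw [Complex.star_def, Complex.mul_conj]
    norm_cast
    rw [Complex.normSq_eq_norm_sq, hpair_norm]
    norm_num
  -- P is fixed
  have hPfix : ∀ τ : Gh, β τ (Phi x * d * star (Phi x)) = Phi x * d * star (Phi x) := by
    intro τ
    rw [map_mul, map_mul, hβstar, hhom τ, hDfix d hd τ, star_smul]
    rw [smul_mul_assoc, mul_smul_comm, smul_mul_assoc, smul_smul,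
      mul_comm (star (pair τ t)) (pair τ t), hunit_scalar, one_smul]
  -- inverses
  have hinv : ∀ w : A, w ∈ D → (0:A) ≤ w → ∀ ε : ℝ, 0 < ε →
      ∃ r : A, r ∈ D ∧ star r = r ∧ r * (w + (ε:ℂ) • 1) = 1 ∧ (w + (ε:ℂ) • 1) * r = 1 := by
    intro w hw hw0 ε hε
    have hu1 : IsUnit ((ε:ℂ) • (1:A)) := by
      refine ⟨⟨(ε:ℂ) • 1, ((ε⁻¹:ℝ):ℂ) • 1, ?_, ?_⟩, rfl⟩ <;>
      · rw [smul_mul_smul_comm, one_mul, ← Complex.ofReal_mul]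
        norm_num [mul_inv_cancel₀ hε.ne', inv_mul_cancel₀ hε.ne']
    have hpos1 : (0:A) ≤ (ε:ℂ) • 1 :=
      gc_smul_nonneg hε.le (by simpa using star_mul_self_nonneg (1:A))
    have hu : IsUnit (w + (ε:ℂ) • 1) :=
      CStarAlgebra.isUnit_of_le _ (le_add_of_nonneg_left hw0) (hu1.isStrictlyPositive hpos1)
    have h1 : (↑hu.unit⁻¹ : A) * (w + (ε:ℂ) • 1) = 1 := hu.val_inv_mul
    have h2 : (w + (ε:ℂ) • 1) * (↑hu.unit⁻¹ : A) = 1 := hu.mul_val_inv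
    have hsa : star (w + (ε:ℂ) • 1) = w + (ε:ℂ) • 1 := by
      rw [star_add, (IsSelfAdjoint.of_nonneg hw0).star_eq, star_smul, star_one,
        Complex.star_def, Complex.conj_ofReal]
    have hstar : star (↑hu.unit⁻¹ : A) = (↑hu.unit⁻¹ : A) := by
      calc star (↑hu.unit⁻¹ : A)
          = star (↑hu.unit⁻¹ : A) * ((w + (ε:ℂ) • 1) * (↑hu.unit⁻¹ : A)) := by
            rw [h2, mul_one]
      _ = (star (↑hu.unit⁻¹ : A) * star (w + (ε:ℂ) • 1)) * (↑hu.unit⁻¹ : A) := by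
            rw [hsa, mul_assoc]
      _ = star ((w + (ε:ℂ) • 1) * (↑hu.unit⁻¹ : A)) * (↑hu.unit⁻¹ : A) := by rw [star_mul]
      _ = (↑hu.unit⁻¹ : A) := by rw [h2, star_one, one_mul]
    have hfix : ∀ ω : Gh, β ω (↑hu.unit⁻¹ : A) = (↑hu.unit⁻¹ : A) := by
      intro ω
      have hfixw : β ω (w + (ε:ℂ) • 1) = w + (ε:ℂ) • 1 := by
        rw [map_add, hDfix w hw ω, _root_.map_smul, map_one]
      calc β ω (↑hu.unit⁻¹ : A)
          = β ω (↑hu.unit⁻¹ : A) * ((w + (ε:ℂ) • 1) * (↑hu.unit⁻¹ : A)) := by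
            rw [h2, mul_one]
      _ = (β ω (↑hu.unit⁻¹ : A) * β ω (w + (ε:ℂ) • 1)) * (↑hu.unit⁻¹ : A) := by
            rw [hfixw, mul_assoc]
      _ = β ω ((↑hu.unit⁻¹ : A) * (w + (ε:ℂ) • 1)) * (↑hu.unit⁻¹ : A) := by
            rw [map_mul]
      _ = (↑hu.unit⁻¹ : A) := by rw [h1, map_one, one_mul]
    have hcom : ∀ c ∈ D, (↑hu.unit⁻¹ : A) * c = c * (↑hu.unit⁻¹ : A) := by
      intro c hc
      have hcomm : c * (w + (ε:ℂ) • 1) = (w + (ε:ℂ) • 1) * c := by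
        rw [mul_add, add_mul, hDcomm c hc w hw, mul_smul_comm, smul_mul_assoc, mul_one,
          one_mul]
      calc (↑hu.unit⁻¹ : A) * c
          = (↑hu.unit⁻¹ : A) * (c * ((w + (ε:ℂ) • 1) * (↑hu.unit⁻¹ : A))) := by
            rw [h2, mul_one]
      _ = (↑hu.unit⁻¹ : A) * ((c * (w + (ε:ℂ) • 1)) * (↑hu.unit⁻¹ : A)) := by
            rw [mul_assoc]
      _ = ((↑hu.unit⁻¹ : A) * (w + (ε:ℂ) • 1)) * (c * (↑hu.unit⁻¹ : A)) := by
            rw [hcomm]; noncomm_ring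
      _ = c * (↑hu.unit⁻¹ : A) := by rw [h1, one_mul]
    exact ⟨(↑hu.unit⁻¹ : A), hDmasa _ hfix hcom, hstar, h1, h2⟩
  -- choose resolvents
  have hra' : ∀ k : ℕ, ∃ r : A, r ∈ D ∧ star r = r ∧
      r * (x * star x + (((1/(k+1:ℝ) : ℝ)) : ℂ) • 1) = 1 ∧
      (x * star x + (((1/(k+1:ℝ) : ℝ)) : ℂ) • 1) * r = 1 :=
    fun k => hinv (x * star x) haD (mul_star_self_nonneg x) (1/(k+1:ℝ)) (by positivity)
  choose ra hraD hras hra1 hra2 using hra'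
  have hrb' : ∀ k : ℕ, ∃ r : A, r ∈ D ∧ star r = r ∧
      r * (star x * x + (((1/(k+1:ℝ) : ℝ)) : ℂ) • 1) = 1 ∧
      (star x * x + (((1/(k+1:ℝ) : ℝ)) : ℂ) • 1) * r = 1 :=
    fun k => hinv (star x * x) hbD (star_mul_self_nonneg x) (1/(k+1:ℝ)) (by positivity)
  choose rb hrbD hrbs hrb1 hrb2 using hrb'
  -- approximation lemma
  have happrox : ∀ e : A, e ∈ D →
      ∀ k : ℕ, ‖x * (rb k * (star x * e * x)) - e * x‖
        ≤ ‖e‖ * Real.sqrt ((1/(k+1:ℝ)) * ‖(1:A)‖) := by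
    intro e he k
    set ε : ℝ := 1/(k+1:ℝ) with hε_def
    have hε : 0 < ε := by positivity
    have hxr : x * rb k = ra k * x := by
      have hswap : (x * star x + (ε:ℂ) • 1) * x = x * (star x * x + (ε:ℂ) • 1) := by
        rw [add_mul, mul_add, mul_assoc, smul_mul_assoc, mul_smul_comm, one_mul, mul_one]
      calc x * rb k = (ra k * (x * star x + (ε:ℂ) • 1)) * (x * rb k) := by
            rw [hra1, one_mul]
      _ = ra k * (((x * star x + (ε:ℂ) • 1) * x) * rb k) := by noncomm_ring
      _ = ra k * ((x * (star x * x + (ε:ℂ) • 1)) * rb k) := by rw [hswap]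
      _ = ra k * (x * ((star x * x + (ε:ℂ) • 1) * rb k)) := by noncomm_ring
      _ = ra k * x := by rw [hrb2, mul_one]
    have hra_a : ra k * (x * star x) = 1 - (ε:ℂ) • ra k := by
      have h := hra1 k
      rw [mul_add, mul_smul_comm, mul_one] at h
      linear_combination (norm := noncomm_ring) h
    have hchain : x * (rb k * (star x * e * x)) - e * x = -((ε:ℂ) • (ra k * (e * x))) := by
      have h1 : x * (rb k * (star x * e * x)) = (x * rb k) * (star x * e * x) := by
        noncomm_ring
      rw [h1, hxr]
      have h2 : (ra k * x) * (star x * e * x) = (ra k * (x * star x)) * (e * x) := by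
        noncomm_ring
      rw [h2, hra_a]
      rw [sub_mul, one_mul, smul_mul_assoc]
      abel
    rw [hchain, norm_neg]
    have hcommra : ra k * (e * x) = e * (ra k * x) := by
      rw [← mul_assoc, ← mul_assoc, hDcomm (ra k) (hraD k) e he]
    rw [hcommra]
    have h3 : (ε:ℂ) • (e * (ra k * x)) = e * ((ε:ℂ) • (ra k * x)) := by
      rw [mul_smul_comm]
    rw [h3]
    calc ‖e * ((ε:ℂ) • (ra k * x))‖ ≤ ‖e‖ * ‖(ε:ℂ) • (ra k * x)‖ := norm_mul_le _ _
    _ ≤ ‖e‖ * Real.sqrt (ε * ‖(1:A)‖) := by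
        refine mul_le_mul_of_nonneg_left ?_ (norm_nonneg e)
        exact gc_est x ε hε (ra k) (hra1 k) (hra2 k)
  have hsqrt0 : Tendsto (fun k : ℕ => Real.sqrt ((1/(k+1:ℝ)) * ‖(1:A)‖)) atTop (nhds 0) := by
    have h0 : Tendsto (fun k : ℕ => (1/(k+1:ℝ)) * ‖(1:A)‖) atTop (nhds 0) := by
      simpa using tendsto_one_div_add_atTop_nhds_zero_nat.mul_const ‖(1:A)‖
    exact (Real.continuous_sqrt.tendsto' 0 0 (by simp)).comp h0
  have htend : ∀ e : A, e ∈ D →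
      Tendsto (fun k => x * (rb k * (star x * e * x))) atTop (nhds (e * x)) := by
    intro e he
    rw [tendsto_iff_norm_sub_tendsto_zero]
    apply squeeze_zero (fun k => norm_nonneg _) (happrox e he)
    simpa using hsqrt0.const_mul ‖e‖
  -- m * (c k) tends to e * m
  have htendm : ∀ e : A, e ∈ D →
      Tendsto (fun k => Phi x * (rb k * (star x * e * x))) atTop (nhds (e * Phi x)) := by
    intro e he
    have hmem : ∀ k, rb k * (star x * e * x) ∈ D := fun k =>
      mul_mem (hrbD k) ((hx e he).2)
    rw [tendsto_iff_norm_sub_tendsto_zero]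
    refine squeeze_zero (fun k => norm_nonneg _) (g := fun k =>
      ‖x * (rb k * (star x * e * x)) - e * x‖) ?_ ?_
    · intro k
      rw [hPhi_rmul _ (hmem k) x, hPhi_lmul e he x, hPhi_sub]
      exact hPhi_norm _
    · have := htend e he
      rwa [tendsto_iff_norm_sub_tendsto_zero] at this
  -- commutation
  have hPcomm : ∀ e ∈ D, (Phi x * d * star (Phi x)) * e = e * (Phi x * d * star (Phi x)) := by
    intro e he
    have hse : star e ∈ D := star_mem he
    have hgD : star x * e * x ∈ D := (hx e he).2
    have hg'D : star x * star e * x ∈ D := (hx (star e) hse).2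
    -- LIM1
    have LIM1 : Tendsto
        (fun k => (Phi x * (rb k * (star x * e * x))) * (d * star (Phi x))) atTop
        (nhds (e * (Phi x * d * star (Phi x)))) := by
      have h := (htendm e he).mul (tendsto_const_nhds (x := d * star (Phi x)))
      have heq : e * (Phi x * d * star (Phi x)) = (e * Phi x) * (d * star (Phi x)) := by
        noncomm_ring
      rw [heq]
      exact h
    -- LIM2
    have LIM2 : Tendsto
        (fun k => (Phi x * (rb k * (star x * e * x))) * (d * star (Phi x))) atTop
        (nhds ((Phi x * d * star (Phi x)) * e)) := by
      have hstar_cb' : ∀ k, star (rb k * (star x * star e * x))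
          = (star x * e * x) * rb k := by
        intro k
        rw [star_mul, star_mul, star_mul, star_star, star_star, hrbs]
        noncomm_ring
      have h1 : Tendsto (fun k => star (Phi x * (rb k * (star x * star e * x)))) atTop
          (nhds (star (star e * Phi x))) :=
        (continuous_star.tendsto _).comp (htendm (star e) hse)
      have h2 : Tendsto (fun k => ((star x * e * x) * rb k) * star (Phi x)) atTop
          (nhds (star (Phi x) * e)) := by
        have heq1 : (fun k => ((star x * e * x) * rb k) * star (Phi x))
            = fun k => star (Phi x * (rb k * (star x * star e * x))) := by
          funext k
          rw [star_mul, hstar_cb' k]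
        have heq2 : star (Phi x) * e = star (star e * Phi x) := by
          rw [star_mul, star_star]
        rw [heq1, heq2]
        exact h1
      have h3 := (tendsto_const_nhds (x := Phi x * d)).mul h2
      have heq3 : (Phi x * d) * (star (Phi x) * e) = (Phi x * d * star (Phi x)) * e := by
        noncomm_ring
      rw [heq3] at h3
      have heq4 : (fun k => (Phi x * d) * (((star x * e * x) * rb k) * star (Phi x)))
          = fun k => (Phi x * (rb k * (star x * e * x))) * (d * star (Phi x)) := by
        funext k
        have hdc : d * ((star x * e * x) * rb k) = (rb k * (star x * e * x)) * d := by
          rw [hDcomm d hd ((star x * e * x) * rb k) (mul_mem hgD (hrbD k)),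
              hDcomm (star x * e * x) hgD (rb k) (hrbD k)]
        calc (Phi x * d) * (((star x * e * x) * rb k) * star (Phi x))
            = Phi x * (d * ((star x * e * x) * rb k)) * star (Phi x) := by noncomm_ring
        _ = Phi x * ((rb k * (star x * e * x)) * d) * star (Phi x) := by rw [hdc]
        _ = (Phi x * (rb k * (star x * e * x))) * (d * star (Phi x)) := by noncomm_ring
      rw [← heq4]
      exact h3
    exact tendsto_nhds_unique LIM2 LIM1
  exact hDmasa _ hPfix hPcomm

end Aux

/-- Let `Ĝ` act strongly on a C*-algebra `A` and let `D` be a maximal abelian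
subalgebra of the fixed-point algebra `A₀ = A^Ĝ`.  If `n ∈ A` is a normalizer of `D`
(`nDn* ⊆ D` and `n*Dn ⊆ D`), then for every `t ∈ Γ`, `Φ_t(n)` is also a normalizer of `D`. -/
theorem gamma_cartan_stmt5
    {A : Type*} [NormedRing A] [StarRing A] [CStarRing A] [NormedAlgebra ℂ A]
    [CompleteSpace A] [StarModule ℂ A]
    {Γ : Type*} [AddCommGroup Γ]
    {Gh : Type*} [CommGroup Gh] [TopologicalSpace Gh] [IsTopologicalGroup Gh]
    [CompactSpace Gh] [MeasurableSpace Gh] [BorelSpace Gh]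
    (μ : Measure Gh) [μ.IsHaarMeasure] [IsProbabilityMeasure μ]
    (β : Gh →* (A ≃ₐ[ℂ] A))
    (hβstar : ∀ (ω : Gh) (a : A), β ω (star a) = star (β ω a))
    (hβiso : ∀ (ω : Gh) (a : A), ‖β ω a‖ = ‖a‖)
    (hβcont : ∀ a : A, Continuous fun ω => β ω a)
    (pair : Gh → Γ → ℂ)
    (hpair_cont : ∀ t, Continuous fun ω => pair ω t)
    (hpair_norm : ∀ ω t, ‖pair ω t‖ = 1)
    (hpair_mul : ∀ ω σ t, pair (ω * σ) t = pair ω t * pair σ t)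
    (hpair_add : ∀ ω s t, pair ω (s + t) = pair ω s * pair ω t)
    (hpair_orth : ∀ t : Γ, (∫ ω, pair ω t ∂μ) = if t = 0 then 1 else 0)
    -- `D` is an abelian C*-subalgebra of the fixed point algebra `A₀ = A^Ĝ` …
    (D : StarSubalgebra ℂ A)
    (hDclosed : IsClosed (D : Set A))
    (hDfix : ∀ d ∈ D, ∀ ω : Gh, β ω d = d)
    (hDcomm : ∀ d ∈ D, ∀ e ∈ D, d * e = e * d)
    -- … which is maximal abelian in `A₀`.
    (hDmasa : ∀ a : A, (∀ ω : Gh, β ω a = a) → (∀ d ∈ D, a * d = d * a) → a ∈ D)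
    -- `n` is a normalizer of `D` in `A`
    (n : A)
    (hn : ∀ d ∈ D, n * d * star n ∈ D ∧ star n * d * n ∈ D) :
    ∀ t : Γ, ∀ d ∈ D,
      (∫ ω, pair ω⁻¹ t • β ω n ∂μ) * d * star (∫ ω, pair ω⁻¹ t • β ω n ∂μ) ∈ D ∧
      star (∫ ω, pair ω⁻¹ t • β ω n ∂μ) * d * (∫ ω, pair ω⁻¹ t • β ω n ∂μ) ∈ D := by
  intro t d hd
  have hint : ∀ (z : A) (s : Γ), Integrable (fun ω => pair ω⁻¹ s • β ω z) μ := fun z s =>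
    (((hpair_cont s).comp continuous_inv).smul (hβcont z)).integrable_of_hasCompactSupport
      (HasCompactSupport.of_compactSpace _)
  have hpair0 : ∀ ω : Gh, pair ω 0 = 1 := by
    intro ω
    have h := hpair_add ω 0 0
    rw [add_zero] at h
    have hne : pair ω 0 ≠ 0 := by
      intro h0
      have h1 := hpair_norm ω 0
      rw [h0] at h1
      simp at h1
    exact mul_left_cancel₀ hne (by rw [mul_one, ← h])
  have hconj : ∀ (ω : Gh) (s : Γ), star (pair ω s) = pair ω (-s) := by
    intro ω s
    have hne : pair ω s ≠ 0 := by
      intro h0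
      have h1 := hpair_norm ω s
      rw [h0] at h1
      simp at h1
    have h1 : pair ω s * star (pair ω s) = 1 := by
      rw [Complex.star_def, Complex.mul_conj]
      norm_cast
      rw [Complex.normSq_eq_norm_sq, hpair_norm]
      norm_num
    have h2 : pair ω s * pair ω (-s) = 1 := by
      rw [← hpair_add, add_neg_cancel, hpair0]
    exact mul_left_cancel₀ hne (h1.trans h2.symm)
  have hstarm : star (∫ ω, pair ω⁻¹ t • β ω n ∂μ)
      = ∫ ω, pair ω⁻¹ (-t) • β ω (star n) ∂μ := by
    have hLa : ∀ z : A, ((starL' ℝ : A ≃L[ℝ] A) : A →L[ℝ] A) z = star z := fun z => rfl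
    have h := ContinuousLinearMap.integral_comp_comm
      ((starL' ℝ : A ≃L[ℝ] A) : A →L[ℝ] A) (hint n t)
    calc star (∫ ω, pair ω⁻¹ t • β ω n ∂μ)
        = ((starL' ℝ : A ≃L[ℝ] A) : A →L[ℝ] A) (∫ ω, pair ω⁻¹ t • β ω n ∂μ) := rfl
    _ = ∫ ω, ((starL' ℝ : A ≃L[ℝ] A) : A →L[ℝ] A) (pair ω⁻¹ t • β ω n) ∂μ := h.symm
    _ = ∫ ω, pair ω⁻¹ (-t) • β ω (star n) ∂μ := by
        congr 1
        funext ω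
        rw [hLa, star_smul, hconj, hβstar]
  constructor
  · exact gamma_cartan_aux μ β hβstar hβiso hβcont pair hpair_cont hpair_norm hpair_mul
      D hDfix hDcomm hDmasa n hn t d hd
  · have hn' : ∀ c ∈ D, star n * c * star (star n) ∈ D ∧ star (star n) * c * star n ∈ D := by
      intro c hc
      rw [star_star]
      exact ⟨(hn c hc).2, (hn c hc).1⟩
    have h := gamma_cartan_aux μ β hβstar hβiso hβcont pair hpair_cont hpair_norm hpair_mul
      D hDfix hDcomm hDmasa (star n) hn' (-t) d hd
    rw [← hstarm] at h
    rwa [star_star] at h
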